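/- An Archimedean vector lattice X (over the reals) is finite-dimensional if and only if every net in X that is unbounded order convergent (uo-convergent) to some element of X is eventually order bounded in X. -/

import Mathlib

set_option linter.unusedSectionVars false
set_option maxHeartbeats 1000000


/-- A net `x : ι → X` (indexed by a preordered set `ι`) *order converges* (`o`-converges)
to `l ∈ X` if there is a net `y : Γ → X` over a nonempty directed set `Γ` which decreases
to `0` (i.e. `y` is antitone and `inf_γ y γ = 0`) such that for every `γ` there is an index
`α₀` with `|x α - l| ≤ y γ` for all `α ≥ α₀`. -/
def OConvergesTo {X : Type u} [Lattice X] [AddCommGroup X]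
    {ι : Type v} [Preorder ι] (x : ι → X) (l : X) : Prop :=
  ∃ (Γ : Type u) (_ : Preorder Γ) (_ : Nonempty Γ),
    IsDirected Γ (· ≤ ·) ∧
    ∃ y : Γ → X, Antitone y ∧ IsGLB (Set.range y) 0 ∧
      ∀ γ : Γ, ∃ α₀ : ι, ∀ α : ι, α₀ ≤ α → |x α - l| ≤ y γ

/-- A net `x : ι → X` is *unbounded order convergent* (`uo`-convergent) to `l ∈ X` if
`|x α - l| ⊓ y` order converges to `0` for every `y ≥ 0`. -/
def UOConvergesTo {X : Type u} [Lattice X] [AddCommGroup X]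
    {ι : Type v} [Preorder ι] (x : ι → X) (l : X) : Prop :=
  ∀ y : X, 0 ≤ y → OConvergesTo (fun α => |x α - l| ⊓ y) (0 : X)

/-- A net `x : ι → X` is *eventually order bounded* if there are `α₀ ∈ ι` and `b ∈ X`
with `|x α| ≤ b` for all `α ≥ α₀`. -/
def EventuallyOrderBounded {X : Type u} [Lattice X] [AddCommGroup X]
    {ι : Type v} [Preorder ι] (x : ι → X) : Prop :=
  ∃ (α₀ : ι) (b : X), ∀ α : ι, α₀ ≤ α → |x α| ≤ b

/-- A vector lattice is *Archimedean* if `n • x ≤ y` for all `n : ℕ` implies `x ≤ 0`. -/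
def ArchimedeanVL (X : Type u) [Lattice X] [AddCommGroup X] : Prop :=
  ∀ x y : X, (∀ n : ℕ, n • x ≤ y) → x ≤ 0

section LGroup
variable {X : Type*} [AddCommGroup X] [Lattice X] [CovariantClass X X (· + ·) (· ≤ ·)]

theorem my_inf_add_le {a b d : X} (ha : 0 ≤ a) (hb : 0 ≤ b) (hd : 0 ≤ d) :
    a ⊓ (b + d) ≤ a ⊓ b + a ⊓ d := by
  have e1 : a ⊓ b + a ⊓ d = (a + a ⊓ d) ⊓ (b + a ⊓ d) := by
    rw [add_comm (a ⊓ b) (a ⊓ d), add_inf, add_comm (a ⊓ d) a, add_comm (a ⊓ d) b]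
  have e2 : a + a ⊓ d = (a + a) ⊓ (a + d) := add_inf _ _ _
  have e3 : b + a ⊓ d = (b + a) ⊓ (b + d) := add_inf _ _ _
  rw [e1, e2, e3]
  refine le_inf (le_inf ?_ ?_) (le_inf ?_ ?_)
  · exact inf_le_left.trans (le_add_of_nonneg_left ha)
  · exact inf_le_left.trans (le_add_of_nonneg_right hd)
  · exact inf_le_left.trans (le_add_of_nonneg_left hb)
  · exact inf_le_right

theorem my_inf_nsmul_le {a b : X} (ha : 0 ≤ a) (hb : 0 ≤ b) (n : ℕ) :
    a ⊓ (n • b) ≤ n • (a ⊓ b) := by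
  induction n with
  | zero => simp
  | succ n ih =>
      rw [succ_nsmul, succ_nsmul]
      calc a ⊓ (n • b + b) ≤ a ⊓ (n • b) + a ⊓ b :=
            my_inf_add_le ha (nsmul_nonneg hb n) hb
        _ ≤ n • (a ⊓ b) + a ⊓ b := add_le_add_left ih _

theorem my_disj_nsmul {a b : X} (ha : 0 ≤ a) (hb : 0 ≤ b) (h : a ⊓ b = 0) (n m : ℕ) :
    (n • a) ⊓ (m • b) = 0 := by
  have h0 : 0 ≤ (n • a) ⊓ (m • b) := le_inf (nsmul_nonneg ha n) (nsmul_nonneg hb m)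
  refine le_antisymm ?_ h0
  calc (n • a) ⊓ (m • b) = (m • b) ⊓ (n • a) := inf_comm _ _
    _ ≤ n • ((m • b) ⊓ a) := my_inf_nsmul_le (nsmul_nonneg hb m) ha n
    _ = n • (a ⊓ (m • b)) := by rw [inf_comm]
    _ ≤ n • (m • (a ⊓ b)) := nsmul_le_nsmul_right (my_inf_nsmul_le ha hb m) n
    _ = 0 := by rw [h]; simp


theorem my_sum_nonneg {ι : Type*} {f : ι → X} {t : Finset ι}
    (hf : ∀ i ∈ t, 0 ≤ f i) : 0 ≤ ∑ i ∈ t, f i := by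
  classical
  induction t using Finset.induction with
  | empty => simp
  | insert _ _ hi ih =>
      rename_i j s
      rw [Finset.sum_insert hi]
      exact add_nonneg (hf j (Finset.mem_insert_self j s))
        (ih fun i hi' => hf i (Finset.mem_insert_of_mem hi'))

theorem my_single_le_sum {ι : Type*} {f : ι → X} {t : Finset ι}
    (hf : ∀ i ∈ t, 0 ≤ f i) {j : ι} (hj : j ∈ t) : f j ≤ ∑ i ∈ t, f i := by
  classical
  have : ∑ i ∈ t, f i = f j + ∑ i ∈ t.erase j, f i := (Finset.add_sum_erase t f hj).symm
  rw [this]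
  refine le_add_of_nonneg_right (my_sum_nonneg fun i hi' => hf i (Finset.mem_of_mem_erase hi'))

theorem my_sum_le_sum {ι : Type*} {f g : ι → X} {t : Finset ι}
    (h : ∀ i ∈ t, f i ≤ g i) : ∑ i ∈ t, f i ≤ ∑ i ∈ t, g i := by
  classical
  induction t using Finset.induction with
  | empty => simp
  | insert _ _ hi ih =>
      rename_i j s
      rw [Finset.sum_insert hi, Finset.sum_insert hi]
      exact add_le_add (h j (Finset.mem_insert_self j s))
        (ih fun i hi' => h i (Finset.mem_insert_of_mem hi'))

theorem my_inf_sum_le {ι : Type*} {a : X} {f : ι → X} (t : Finset ι)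
    (ha : 0 ≤ a) (hf : ∀ i ∈ t, 0 ≤ f i) :
    a ⊓ (∑ i ∈ t, f i) ≤ ∑ i ∈ t, a ⊓ f i := by
  classical
  induction t using Finset.induction with
  | empty => simp
  | insert _ _ hi ih =>
      rename_i j s
      rw [Finset.sum_insert hi, Finset.sum_insert hi]
      have hs : (0:X) ≤ ∑ i ∈ s, f i :=
        my_sum_nonneg fun i hi' => hf i (Finset.mem_insert_of_mem hi')
      have h1 : a ⊓ (f j + ∑ i ∈ s, f i) ≤ a ⊓ f j + a ⊓ (∑ i ∈ s, f i) :=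
        my_inf_add_le ha (hf j (Finset.mem_insert_self j s)) hs
      exact h1.trans (add_le_add_right (ih fun i hi' => hf i (Finset.mem_insert_of_mem hi')) _)

theorem my_sum_disj_le {ι : Type*} {x : X} {f : ι → X} (t : Finset ι)
    (hf : ∀ i ∈ t, 0 ≤ f i) (hle : ∀ i ∈ t, f i ≤ x)
    (hd : ∀ i ∈ t, ∀ j ∈ t, i ≠ j → f i ⊓ f j = 0) (hx : 0 ≤ x) :
    ∑ i ∈ t, f i ≤ x := by
  classical
  induction t using Finset.induction with
  | empty => simpa using hx
  | insert _ _ hi ih =>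
      rename_i j s
      rw [Finset.sum_insert hi]
      have hmem : ∀ i ∈ s, i ∈ insert j s := fun i hi' => Finset.mem_insert_of_mem hi'
      have hsum_le : ∑ i ∈ s, f i ≤ x :=
        ih (fun i hi' => hf i (hmem i hi')) (fun i hi' => hle i (hmem i hi'))
          (fun i hi' k hk hik => hd i (hmem i hi') k (hmem k hk) hik)
      have hjx : f j ≤ x := hle j (Finset.mem_insert_self j s)
      have hdisj : f j ⊓ (∑ i ∈ s, f i) = 0 := by
        have h0 : 0 ≤ f j ⊓ (∑ i ∈ s, f i) :=
          le_inf (hf j (Finset.mem_insert_self j s))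
            (my_sum_nonneg fun i hi' => hf i (hmem i hi'))
        refine le_antisymm ?_ h0
        have h1 : f j ⊓ (∑ i ∈ s, f i) ≤ ∑ i ∈ s, f j ⊓ f i :=
          my_inf_sum_le s (hf j (Finset.mem_insert_self j s))
            (fun i hi' => hf i (hmem i hi'))
        have h2 : ∑ i ∈ s, f j ⊓ f i = 0 := by
          refine Finset.sum_eq_zero fun i hi' => ?_
          exact hd j (Finset.mem_insert_self j s) i (hmem i hi')
            (by rintro rfl; exact hi hi')
        rw [h2] at h1; exact h1
      have : f j + (∑ i ∈ s, f i) = f j ⊔ (∑ i ∈ s, f i) := by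
        have := inf_add_sup (f j) (∑ i ∈ s, f i)
        rw [hdisj, zero_add] at this
        exact this.symm
      rw [this]
      exact sup_le hjx hsum_le

end LGroup


section ModuleHelp
variable {X : Type*} [AddCommGroup X] [Lattice X] [CovariantClass X X (· + ·) (· ≤ ·)]
  [Module ℝ X] [PosSMulMono ℝ X]

theorem my_smul_mono_scalar {s t : ℝ} {a : X} (h : s ≤ t) (ha : 0 ≤ a) :
    s • a ≤ t • a := by
  have h1 : 0 ≤ (t - s) • a := smul_nonneg (by linarith) ha
  have h2 : s • a + (t - s) • a = t • a := by rw [← add_smul]; ring_nf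
  calc s • a ≤ s • a + (t - s) • a := le_add_of_nonneg_right h1
    _ = t • a := h2

theorem my_inv_smul_le {c : ℝ} (hc : 0 < c) {a b : X} (h : a ≤ c • b) :
    c⁻¹ • a ≤ b := by
  have := smul_le_smul_of_nonneg_left h (le_of_lt (inv_pos.2 hc))
  rwa [inv_smul_smul₀ (ne_of_gt hc)] at this

theorem my_disj_smul {a b : X} (ha : 0 ≤ a) (hb : 0 ≤ b) (h : a ⊓ b = 0)
    {s t : ℝ} (hs : 0 ≤ s) (ht : 0 ≤ t) : (s • a) ⊓ (t • b) = 0 := by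
  have h0 : 0 ≤ (s • a) ⊓ (t • b) := le_inf (smul_nonneg hs ha) (smul_nonneg ht hb)
  refine le_antisymm ?_ h0
  set z := (s • a) ⊓ (t • b) with hz
  set C := max s t with hC
  rcases eq_or_lt_of_le (le_max_iff.2 (Or.inl hs) : (0:ℝ) ≤ C) with hC0 | hC0
  · have hs0 : s = 0 := le_antisymm (by rw [hC0]; exact le_max_left s t) hs
    have ht0 : t = 0 := le_antisymm (by rw [hC0]; exact le_max_right s t) ht
    rw [hz, hs0, ht0, zero_smul, zero_smul, inf_idem]
  · have h1 : z ≤ C • a := inf_le_left.trans (my_smul_mono_scalar (le_max_left s t) ha)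
    have h2 : z ≤ C • b := inf_le_right.trans (my_smul_mono_scalar (le_max_right s t) hb)
    have h3 : C⁻¹ • z ≤ a ⊓ b := le_inf (my_inv_smul_le hC0 h1) (my_inv_smul_le hC0 h2)
    rw [h] at h3
    calc z = C • (C⁻¹ • z) := by rw [smul_inv_smul₀ (ne_of_gt hC0)]
      _ ≤ C • (0 : X) := smul_le_smul_of_nonneg_left h3 (le_of_lt hC0)
      _ = 0 := smul_zero C

/-- From `z ≤ ε • a` for all `ε > 0` and Archimedean, conclude `z ≤ 0`. -/
theorem my_arch_eps (hA : ∀ x y : X, (∀ n : ℕ, n • x ≤ y) → x ≤ 0)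
    {z a : X} (ha : 0 ≤ a) (h : ∀ ε : ℝ, 0 < ε → z ≤ ε • a) : z ≤ 0 := by
  refine hA z a fun n => ?_
  cases n with
  | zero => simpa using ha
  | succ n =>
      have hn : (0:ℝ) < (n+1 : ℕ) := by positivity
      have h1 : z ≤ ((n+1 : ℕ) : ℝ)⁻¹ • a := h _ (by positivity)
      have h2 : ((n+1 : ℕ) : ℝ) • z ≤ ((n+1 : ℕ) : ℝ) • (((n+1 : ℕ) : ℝ)⁻¹ • a) :=
        smul_le_smul_of_nonneg_left h1 (le_of_lt hn)
      rw [smul_inv_smul₀ (ne_of_gt hn)] at h2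
      rwa [← Nat.cast_smul_eq_nsmul ℝ]

end ModuleHelp


section Lam
variable {X : Type*} [AddCommGroup X] [Lattice X] [CovariantClass X X (· + ·) (· ≤ ·)]
  [Module ℝ X] [PosSMulMono ℝ X]

-- sanity: AddRightMono is available
example (a : X) : a⁺ ⊓ a⁻ = 0 := posPart_inf_negPart_eq_zero a

def lamSet (a x : X) : Set ℝ := {t : ℝ | t • a ≤ x}

noncomputable def lamC (a x : X) : ℝ := sSup (lamSet a x)

theorem lamSet_zero_mem {a x : X} (hx : 0 ≤ x) : (0:ℝ) ∈ lamSet a x := by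
  simp [lamSet, hx]

theorem lamSet_bdd (hA : ∀ x y : X, (∀ n : ℕ, n • x ≤ y) → x ≤ 0)
    {a x : X} (ha : 0 ≤ a) (hne : a ≠ 0) : BddAbove (lamSet a x) := by
  by_contra hb
  rw [not_bddAbove_iff] at hb
  have h1 : ∀ n : ℕ, n • a ≤ x := by
    intro n
    obtain ⟨t, ht, hnt⟩ := hb (n : ℝ)
    calc (n : ℕ) • a = ((n : ℕ) : ℝ) • a := (Nat.cast_smul_eq_nsmul ℝ n a).symm
      _ ≤ t • a := my_smul_mono_scalar (le_of_lt hnt) ha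
      _ ≤ x := ht
  exact hne (le_antisymm (hA a x h1) ha)

theorem lamC_nonneg (hA : ∀ x y : X, (∀ n : ℕ, n • x ≤ y) → x ≤ 0)
    {a x : X} (ha : 0 ≤ a) (hne : a ≠ 0) (hx : 0 ≤ x) : 0 ≤ lamC a x :=
  le_csSup (lamSet_bdd hA ha hne) (lamSet_zero_mem hx)

theorem lamC_ub (hA : ∀ x y : X, (∀ n : ℕ, n • x ≤ y) → x ≤ 0)
    {a x : X} (ha : 0 ≤ a) (hne : a ≠ 0) {t : ℝ} (ht : t • a ≤ x) : t ≤ lamC a x :=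
  le_csSup (lamSet_bdd hA ha hne) ht

theorem lamC_smul_le (hA : ∀ x y : X, (∀ n : ℕ, n • x ≤ y) → x ≤ 0)
    {a x : X} (ha : 0 ≤ a) (hne : a ≠ 0) (hx : 0 ≤ x) : (lamC a x) • a ≤ x := by
  have key : ∀ ε : ℝ, 0 < ε → (lamC a x) • a - x ≤ ε • a := by
    intro ε hε
    obtain ⟨t, ht, hlt⟩ := exists_lt_of_lt_csSup ⟨0, lamSet_zero_mem hx⟩
      (show lamC a x - ε < sSup (lamSet a x) by unfold lamC; linarith [lamC_nonneg hA ha hne hx])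
    have h1 : (lamC a x - ε) • a ≤ x := le_trans (my_smul_mono_scalar (le_of_lt hlt) ha) ht
    calc (lamC a x) • a - x ≤ (lamC a x) • a - (lamC a x - ε) • a := by
          exact sub_le_sub_left h1 _
      _ = ε • a := by rw [← sub_smul]; ring_nf
  exact sub_nonpos.mp (my_arch_eps hA ha key)
  
end Lam

section Atoms
variable {X : Type*} [AddCommGroup X] [Lattice X] [CovariantClass X X (· + ·) (· ≤ ·)]
  [Module ℝ X] [PosSMulMono ℝ X]

theorem lamC_mono (hA : ∀ x y : X, (∀ n : ℕ, n • x ≤ y) → x ≤ 0)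
    {a x x' : X} (ha : 0 ≤ a) (hne : a ≠ 0) (hx : 0 ≤ x) (hxx : x ≤ x') :
    lamC a x ≤ lamC a x' :=
  csSup_le_csSup (lamSet_bdd hA ha hne) ⟨0, lamSet_zero_mem hx⟩
    (fun t ht => le_trans ht hxx)

def IsAtomE (a : X) : Prop :=
  0 ≤ a ∧ a ≠ 0 ∧ ∀ y : X, 0 ≤ y → y ≤ a → ∃ t : ℝ, 0 ≤ t ∧ y = t • a

theorem atom_of_no_split (hA : ∀ x y : X, (∀ n : ℕ, n • x ≤ y) → x ≤ 0)
    {a : X} (ha : 0 ≤ a) (hne : a ≠ 0)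
    (h : ∀ p q : X, 0 ≤ p → 0 ≤ q → p ≤ a → q ≤ a → p ⊓ q = 0 → p = 0 ∨ q = 0) :
    IsAtomE a := by
  refine ⟨ha, hne, fun y hy hya => ?_⟩
  have dich : ∀ t : ℝ, 0 ≤ t → t ≤ 1 → y ≤ t • a ∨ t • a ≤ y := by
    intro t ht ht1
    set z := y - t • a with hzdef
    have hpq : z⁺ ⊓ z⁻ = 0 := posPart_inf_negPart_eq_zero z
    have hta : 0 ≤ t • a := smul_nonneg ht ha
    have hp_le : z⁺ ≤ a := by
      have : z ⊔ 0 ≤ y ⊔ 0 := sup_le_sup_right (sub_le_self y hta) 0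
      rw [posPart_def]
      exact this.trans ((sup_eq_left.2 hy).le.trans hya)
    have hq_le : z⁻ ≤ a := by
      rw [negPart_def, hzdef, neg_sub]
      have h1 : (t • a - y) ⊔ 0 ≤ (t • a) ⊔ 0 := sup_le_sup_right (sub_le_self _ hy) 0
      have h2 : (t • a) ⊔ 0 = t • a := sup_eq_left.2 hta
      have h3 : t • a ≤ (1:ℝ) • a := my_smul_mono_scalar ht1 ha
      rw [one_smul] at h3
      exact h1.trans (h2.le.trans h3)
    rcases h _ _ (posPart_nonneg z) (negPart_nonneg z) hp_le hq_le hpq with h0 | h0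
    · left
      have : z ≤ z⁺ := le_posPart z
      rw [h0] at this
      rwa [hzdef, sub_nonpos] at this
    · right
      have : -z ≤ z⁻ := by rw [negPart_def]; exact le_sup_left
      rw [h0] at this
      have : 0 ≤ z := by simpa using this
      rwa [hzdef, sub_nonneg] at this
  have hub1 : ∀ t ∈ lamSet a y, t ≤ 1 := by
    intro t ht
    by_contra hlt
    push_neg at hlt
    have h1 : t • a ≤ a := le_trans ht hya
    have h2 : (t - 1) • a ≤ 0 := by
      rw [sub_smul, one_smul]; exact sub_nonpos.2 h1
    have h3 : a ≤ 0 := by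
      have := smul_le_smul_of_nonneg_left h2 (le_of_lt (inv_pos.2 (by linarith : (0:ℝ) < t - 1)))
      rwa [inv_smul_smul₀ (by linarith : t - 1 ≠ 0), smul_zero] at this
    exact hne (le_antisymm h3 ha)
  set ts := lamC a y with hts
  have hts0 : 0 ≤ ts := lamC_nonneg hA ha hne hy
  have hts1 : ts ≤ 1 := csSup_le ⟨0, lamSet_zero_mem hy⟩ hub1
  have hle : ts • a ≤ y := lamC_smul_le hA ha hne hy
  have hge : y ≤ ts • a := by
    rw [← sub_nonpos]
    refine my_arch_eps hA ha fun ε hε => ?_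
    by_cases hc : ts + ε ≤ 1
    · have hnotin : ts + ε ∉ lamSet a y := by
        intro hmem
        have := lamC_ub hA ha hne hmem
        rw [← hts] at this; linarith
      rcases dich (ts + ε) (by linarith) hc with h0 | h0
      · calc y - ts • a ≤ (ts + ε) • a - ts • a := sub_le_sub_right h0 _
          _ = ε • a := by rw [← sub_smul]; ring_nf
      · exact absurd h0 hnotin
    · push_neg at hc
      calc y - ts • a ≤ (1:ℝ) • a - ts • a := by
            rw [one_smul]; exact sub_le_sub_right hya _
        _ = (1 - ts) • a := by rw [← sub_smul]
        _ ≤ ε • a := my_smul_mono_scalar (by linarith) ha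
  exact ⟨ts, hts0, (le_antisymm hge hle)⟩

end Atoms

section Structure
variable {X : Type*} [AddCommGroup X] [Lattice X] [CovariantClass X X (· + ·) (· ≤ ·)]
  [Module ℝ X] [PosSMulMono ℝ X]

def InfDisjSeq (X : Type*) [AddCommGroup X] [Lattice X] : Prop :=
  ∃ d : ℕ → X, (∀ n, 0 ≤ d n) ∧ (∀ n, d n ≠ 0) ∧ ∀ n m : ℕ, n ≠ m → d n ⊓ d m = 0

theorem atom_below (hA : ∀ x y : X, (∀ n : ℕ, n • x ≤ y) → x ≤ 0)
    (hno : ¬ InfDisjSeq X) {x : X} (hx : 0 ≤ x) (hxne : x ≠ 0) :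
    ∃ a : X, IsAtomE a ∧ a ≤ x := by
  by_contra hcon
  push_neg at hcon
  have split : ∀ z : X, 0 ≤ z → z ≠ 0 → z ≤ x →
      ∃ p q : X, 0 ≤ p ∧ p ≠ 0 ∧ p ≤ z ∧ 0 ≤ q ∧ q ≠ 0 ∧ q ≤ z ∧ p ⊓ q = 0 := by
    intro z hz hzne hzx
    by_contra hs
    have hz_atom : IsAtomE z := by
      refine atom_of_no_split hA hz hzne ?_
      intro p q hp hq hpz hqz hpq
      by_contra hne'
      push_neg at hne'
      exact hs ⟨p, q, hp, hne'.1, hpz, hq, hne'.2, hqz, hpq⟩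
    exact hcon z hz_atom hzx
  set P : X → Prop := fun z => 0 ≤ z ∧ z ≠ 0 ∧ z ≤ x with hP
  have step : ∀ z : {z : X // P z}, ∃ pq : X × X,
      (0 ≤ pq.1 ∧ pq.1 ≠ 0 ∧ pq.1 ≤ z.1) ∧ (P pq.2 ∧ pq.2 ≤ z.1) ∧ pq.1 ⊓ pq.2 = 0 := by
    rintro ⟨z, hz0, hzne, hzx⟩
    obtain ⟨p, q, hp0, hpne, hpz, hq0, hqne, hqz, hpq⟩ := split z hz0 hzne hzx
    exact ⟨(p, q), ⟨hp0, hpne, hpz⟩, ⟨⟨hq0, hqne, hqz.trans hzx⟩, hqz⟩, hpq⟩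
  choose F hF1 hF2 hF3 using step
  let seq : ℕ → {z : X // P z} :=
    fun n => Nat.rec ⟨x, hx, hxne, le_refl x⟩ (fun _ z => ⟨(F z).2, (hF2 z).1⟩) n
  have hseq_succ : ∀ n, (seq (n+1)).1 = (F (seq n)).2 := fun n => rfl
  have hchain : ∀ n, (seq (n+1)).1 ≤ (seq n).1 := fun n => (hF2 (seq n)).2
  have hdec : ∀ n m : ℕ, n ≤ m → (seq m).1 ≤ (seq n).1 := by
    intro n m hnm
    induction m, hnm using Nat.le_induction with
    | base => exact le_refl _
    | succ m hnm ih => exact (hchain m).trans ih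
  set d : ℕ → X := fun n => (F (seq n)).1 with hd
  have hdisj : ∀ n m : ℕ, n < m → d n ⊓ d m = 0 := by
    intro n m hnm
    have h1 : d m ≤ (seq (n+1)).1 := by
      have : d m ≤ (seq m).1 := (hF1 (seq m)).2.2
      exact this.trans (hdec (n+1) m hnm)
    rw [hseq_succ] at h1
    have h2 : d n ⊓ d m ≤ d n ⊓ (F (seq n)).2 := inf_le_inf_left _ h1
    rw [hF3 (seq n)] at h2
    exact le_antisymm h2 (le_inf (hF1 (seq n)).1 (hF1 (seq m)).1)
  refine hno ⟨d, fun n => (hF1 (seq n)).1, fun n => (hF1 (seq n)).2.1, ?_⟩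
  intro n m hnm
  rcases lt_or_gt_of_ne hnm with h | h
  · exact hdisj n m h
  · rw [inf_comm]; exact hdisj m n h

theorem exists_atomic_basis (hA : ∀ x y : X, (∀ n : ℕ, n • x ≤ y) → x ≤ 0)
    (hno : ¬ InfDisjSeq X) :
    ∃ s : Finset X, (∀ a ∈ s, IsAtomE a) ∧ (∀ a ∈ s, ∀ b ∈ s, a ≠ b → a ⊓ b = 0) ∧
      ∀ x : X, 0 ≤ x → x = ∑ a ∈ s, lamC a x • a := by
  classical
  set T : Set (Set X) := {S | (∀ a ∈ S, IsAtomE a) ∧ S.Pairwise (fun a b => a ⊓ b = 0)} with hT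
  obtain ⟨M, hM⟩ : ∃ M, Maximal (· ∈ T) M := by
    refine zorn_subset T ?_
    intro c hcT hchain
    refine ⟨⋃₀ c, ⟨?_, ?_⟩, fun s hs => Set.subset_sUnion_of_mem hs⟩
    · rintro a ⟨S, hSc, haS⟩
      exact (hcT hSc).1 a haS
    · rintro a ⟨S, hSc, haS⟩ b ⟨S', hS'c, hbS'⟩ hab
      rcases hchain.total hSc hS'c with h | h
      · exact (hcT hS'c).2 (h haS) hbS' hab
      · exact (hcT hSc).2 haS (h hbS') hab
  have hMfin : M.Finite := by
    by_contra hinf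
    have hinf' : M.Infinite := hinf
    set e := hinf'.natEmbedding with he
    refine hno ⟨fun n => (e n).1, fun n => (hM.1.1 _ (e n).2).1,
      fun n => (hM.1.1 _ (e n).2).2.1, ?_⟩
    intro n m hnm
    have hne : (e n).1 ≠ (e m).1 := by
      intro h
      exact hnm (e.injective (Subtype.ext h))
    exact hM.1.2 (e n).2 (e m).2 hne
  set s := hMfin.toFinset with hs
  have hmem : ∀ a : X, a ∈ s ↔ a ∈ M := fun a => Set.Finite.mem_toFinset hMfin
  have hatom : ∀ a ∈ s, IsAtomE a := fun a ha => hM.1.1 a ((hmem a).1 ha)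
  have hpair : ∀ a ∈ s, ∀ b ∈ s, a ≠ b → a ⊓ b = 0 :=
    fun a ha b hb hab => hM.1.2 ((hmem a).1 ha) ((hmem b).1 hb) hab
  refine ⟨s, hatom, hpair, ?_⟩
  intro x hx
  have hterm0 : ∀ a ∈ s, 0 ≤ lamC a x • a :=
    fun a ha => smul_nonneg (lamC_nonneg hA (hatom a ha).1 (hatom a ha).2.1 hx) (hatom a ha).1
  have hterm_le : ∀ a ∈ s, lamC a x • a ≤ x :=
    fun a ha => lamC_smul_le hA (hatom a ha).1 (hatom a ha).2.1 hx
  have htermdisj : ∀ a ∈ s, ∀ b ∈ s, a ≠ b → (lamC a x • a) ⊓ (lamC b x • b) = 0 := by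
    intro a ha b hb hab
    exact my_disj_smul (hatom a ha).1 (hatom b hb).1 (hpair a ha b hb hab)
      (lamC_nonneg hA (hatom a ha).1 (hatom a ha).2.1 hx)
      (lamC_nonneg hA (hatom b hb).1 (hatom b hb).2.1 hx)
  have hsum_le : ∑ a ∈ s, lamC a x • a ≤ x :=
    my_sum_disj_le s hterm0 hterm_le htermdisj hx
  set r := x - ∑ a ∈ s, lamC a x • a with hr
  have hr0 : 0 ≤ r := sub_nonneg.2 hsum_le
  have hra : ∀ a ∈ s, r ⊓ a = 0 := by
    intro a ha
    have ha0 := (hatom a ha).1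
    have hane := (hatom a ha).2.1
    have hw0 : 0 ≤ r ⊓ a := le_inf hr0 ha0
    obtain ⟨μ, hμ0, hw⟩ := (hatom a ha).2.2 (r ⊓ a) hw0 inf_le_right
    have hkey : (lamC a x + μ) • a ≤ x := by
      have h1 : lamC a x • a + μ • a ≤ lamC a x • a + r := by
        refine add_le_add_right ?_ _
        rw [← hw]; exact inf_le_left
      have h2 : lamC a x • a + r = x - ∑ b ∈ s.erase a, lamC b x • b := by
        rw [hr, ← Finset.add_sum_erase s _ ha]
        abel
      have h3 : x - ∑ b ∈ s.erase a, lamC b x • b ≤ x := by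
        refine sub_le_self _ (my_sum_nonneg ?_)
        exact fun b hb => hterm0 b (Finset.mem_of_mem_erase hb)
      rw [add_smul]
      exact h1.trans (h2.le.trans h3)
    have := lamC_ub hA ha0 hane hkey
    have hμ : μ = 0 := by linarith
    rw [hμ, zero_smul] at hw
    exact hw
  by_cases hrz : r = 0
  · rw [hr, sub_eq_zero] at hrz
    exact hrz
  · obtain ⟨a', ha'atom, ha'r⟩ := atom_below hA hno hr0 hrz
    have ha'M : a' ∉ M := by
      intro hmem'
      have : r ⊓ a' = 0 := hra a' ((hmem a').2 hmem')
      have h1 : a' ≤ r ⊓ a' := le_inf ha'r (le_refl a')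
      rw [this] at h1
      exact ha'atom.2.1 (le_antisymm h1 ha'atom.1)
    have hins : insert a' M ∈ T := by
      constructor
      · rintro a (rfl | haM)
        · exact ha'atom
        · exact hM.1.1 a haM
      · refine Set.Pairwise.insert hM.1.2 ?_
        intro b hbM hab
        have hb0 := (hM.1.1 b hbM).1
        have h1 : a' ⊓ b ≤ r ⊓ b := inf_le_inf_right b ha'r
        rw [hra b ((hmem b).2 hbM)] at h1
        have h2 : a' ⊓ b = 0 := le_antisymm h1 (le_inf ha'atom.1 hb0)
        exact ⟨h2, by rwa [inf_comm] at h2⟩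
    have := hM.2 hins (Set.subset_insert a' M)
    exact absurd (this (Set.mem_insert a' M)) ha'M

end Structure

section LinIndep
variable {X : Type*} [AddCommGroup X] [Lattice X] [CovariantClass X X (· + ·) (· ≤ ·)]
  [Module ℝ X] [PosSMulMono ℝ X]

theorem disj_linearIndependent {ι : Type*} {d : ι → X}
    (hd0 : ∀ i, 0 ≤ d i) (hdne : ∀ i, d i ≠ 0)
    (hdisj : ∀ i j, i ≠ j → d i ⊓ d j = 0) :
    LinearIndependent ℝ d := by
  classical
  rw [linearIndependent_iff']
  intro t g hsum i hi
  by_contra hgi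
  set tp := t.filter (fun j => 0 < g j) with htp
  set tn := t.filter (fun j => ¬ 0 < g j) with htn
  set Ps := ∑ j ∈ tp, g j • d j with hPs
  set Ns := ∑ j ∈ tn, (-(g j)) • d j with hNs
  have hPsnn : ∀ j ∈ tp, 0 ≤ g j • d j := by
    intro j hj
    exact smul_nonneg (le_of_lt (Finset.mem_filter.1 hj).2) (hd0 j)
  have hNsnn : ∀ j ∈ tn, 0 ≤ (-(g j)) • d j := by
    intro j hj
    have := (Finset.mem_filter.1 hj).2
    exact smul_nonneg (by linarith [not_lt.1 this]) (hd0 j)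
  have hPN : Ps = Ns := by
    have h1 := Finset.sum_filter_add_sum_filter_not t (fun j => 0 < g j) (fun j => g j • d j)
    have h2 : ∑ j ∈ tn, g j • d j = -Ns := by
      rw [hNs, ← Finset.sum_neg_distrib]
      congr 1; funext j; rw [neg_smul, neg_neg]
    rw [hsum] at h1
    rw [← htp, ← htn, h2, ← hPs] at h1
    have : Ps - Ns = 0 := by rw [← h1]; abel
    exact sub_eq_zero.1 this
  rcases (Ne.lt_or_gt hgi : g i < 0 ∨ 0 < g i) with hneg | hpos
  · -- g i < 0 : i ∈ tn
    have hitn : i ∈ tn := Finset.mem_filter.2 ⟨hi, by linarith⟩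
    set w := (-(g i)) • d i with hw
    have hw0 : 0 ≤ w := hNsnn i hitn
    have h1 : w ≤ Ns := my_single_le_sum hNsnn hitn
    rw [← hPN] at h1
    have h2 : w ⊓ Ps ≤ ∑ j ∈ tp, w ⊓ (g j • d j) := my_inf_sum_le tp hw0 hPsnn
    have h3 : ∑ j ∈ tp, w ⊓ (g j • d j) = 0 := by
      refine Finset.sum_eq_zero fun j hj => ?_
      have hij : i ≠ j := by
        intro h
        rw [h] at hneg
        exact absurd (Finset.mem_filter.1 hj).2 (by linarith)
      rw [hw]
      exact my_disj_smul (hd0 i) (hd0 j) (hdisj i j hij) (by linarith)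
        (le_of_lt (Finset.mem_filter.1 hj).2)
    rw [h3] at h2
    have h4 : w ⊓ Ps = w := inf_eq_left.2 h1
    rw [h4] at h2
    have hweq : w = 0 := le_antisymm h2 hw0
    have hne' : -(g i) ≠ 0 := by intro h; apply hgi; linarith [neg_eq_zero.1 h]
    have : d i = 0 := by
      have h5 : (-(g i))⁻¹ • ((-(g i)) • d i) = (-(g i))⁻¹ • (0:X) := by rw [← hw, hweq]
      rwa [inv_smul_smul₀ hne', smul_zero] at h5
    exact hdne i this
  · -- 0 < g i : i ∈ tp
    have hitp : i ∈ tp := Finset.mem_filter.2 ⟨hi, hpos⟩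
    set w := g i • d i with hw
    have hw0 : 0 ≤ w := hPsnn i hitp
    have h1 : w ≤ Ps := my_single_le_sum hPsnn hitp
    rw [hPN] at h1
    have h2 : w ⊓ Ns ≤ ∑ j ∈ tn, w ⊓ ((-(g j)) • d j) := my_inf_sum_le tn hw0 hNsnn
    have h3 : ∑ j ∈ tn, w ⊓ ((-(g j)) • d j) = 0 := by
      refine Finset.sum_eq_zero fun j hj => ?_
      have hij : i ≠ j := by
        intro h
        rw [h] at hpos
        exact absurd hpos (by simpa using (Finset.mem_filter.1 hj).2)
      rw [hw]
      exact my_disj_smul (hd0 i) (hd0 j) (hdisj i j hij) (le_of_lt hpos)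
        (by linarith [not_lt.1 (Finset.mem_filter.1 hj).2])
    rw [h3] at h2
    have h4 : w ⊓ Ns = w := inf_eq_left.2 h1
    rw [h4] at h2
    have hweq : w = 0 := le_antisymm h2 hw0
    have : d i = 0 := by
      have h5 : (g i)⁻¹ • ((g i) • d i) = (g i)⁻¹ • (0:X) := by rw [← hw, hweq]
      rwa [inv_smul_smul₀ hgi, smul_zero] at h5
    exact hdne i this

theorem no_infdisj_of_findim [FiniteDimensional ℝ X] : ¬ InfDisjSeq X := by
  rintro ⟨d, h0, hne, hdisj⟩
  have hli : LinearIndependent ℝ (fun i : Fin (Module.finrank ℝ X + 1) => d i) := by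
    refine disj_linearIndependent (fun i => h0 i) (fun i => hne i) ?_
    intro i j hij
    exact hdisj i j (fun h => hij (Fin.ext h))
  have := hli.fintype_card_le_finrank
  rw [Fintype.card_fin] at this
  omega

end LinIndep

section Distrib
variable {X : Type*} [AddCommGroup X] [Lattice X] [CovariantClass X X (· + ·) (· ≤ ·)]

theorem my_inf_sup_le (r a b : X) : r ⊓ (a ⊔ b) ≤ (r ⊓ a) ⊔ (r ⊓ b) := by
  letI : DistribLattice X := AddCommGroup.toDistribLattice X
  exact le_of_eq (inf_sup_left r a b)

end Distrib

theorem forward_dir {X : Type u} [AddCommGroup X] [Lattice X]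
    [CovariantClass X X (· + ·) (· ≤ ·)] [Module ℝ X] [PosSMulMono ℝ X]
    (hArch : ∀ x y : X, (∀ n : ℕ, n • x ≤ y) → x ≤ 0) [FiniteDimensional ℝ X]
    {ι : Type v} [Preorder ι] (x : ι → X) (l : X)
    (h : UOConvergesTo x l) : ∃ (α₀ : ι) (b : X), ∀ α : ι, α₀ ≤ α → |x α| ≤ b := by
  classical
  have hno := no_infdisj_of_findim (X := X)
  obtain ⟨s, hatom, hpair, hdecomp⟩ := exists_atomic_basis hArch hno
  set e := ∑ a ∈ s, a with he
  have he0 : 0 ≤ e := my_sum_nonneg (fun a ha => (hatom a ha).1)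
  obtain ⟨Γ, iΓ, neΓ, dirΓ, y, hanti, hglb, htail⟩ := h e he0
  have hy0 : ∀ γ, 0 ≤ y γ := fun γ => hglb.1 ⟨γ, rfl⟩
  have hcoord_nonneg : ∀ a ∈ s, ∀ γ : Γ, 0 ≤ lamC a (y γ) :=
    fun a ha γ => lamC_nonneg hArch (hatom a ha).1 (hatom a ha).2.1 (hy0 γ)
  have hbdd : ∀ a ∈ s, BddBelow (Set.range fun γ : Γ => lamC a (y γ)) := by
    intro a ha
    exact ⟨0, by rintro _ ⟨γ, rfl⟩; exact hcoord_nonneg a ha γ⟩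
  set b := ∑ a ∈ s, (sInf (Set.range fun γ : Γ => lamC a (y γ))) • a with hb
  have hinf_nonneg : ∀ a ∈ s, 0 ≤ sInf (Set.range fun γ : Γ => lamC a (y γ)) := by
    intro a ha
    exact Real.sInf_nonneg (by rintro _ ⟨γ, rfl⟩; exact hcoord_nonneg a ha γ)
  have hblb : b ∈ lowerBounds (Set.range y) := by
    rintro _ ⟨γ, rfl⟩
    have hyd : y γ = ∑ a ∈ s, lamC a (y γ) • a := hdecomp (y γ) (hy0 γ)
    rw [hb, hyd]
    refine my_sum_le_sum fun a ha => ?_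
    exact my_smul_mono_scalar (csInf_le (hbdd a ha) ⟨γ, rfl⟩) (hatom a ha).1
  have hb0 : 0 ≤ b :=
    my_sum_nonneg fun a ha => smul_nonneg (hinf_nonneg a ha) (hatom a ha).1
  have hbeq : b = 0 := le_antisymm (hglb.2 hblb) hb0
  have hinf0 : ∀ a ∈ s, sInf (Set.range fun γ : Γ => lamC a (y γ)) = 0 := by
    intro a ha
    have h1 : (sInf (Set.range fun γ : Γ => lamC a (y γ))) • a ≤ b :=
      my_single_le_sum (fun a' ha' => smul_nonneg (hinf_nonneg a' ha') (hatom a' ha').1) ha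
    rw [hbeq] at h1
    by_contra hne'
    have hpos : 0 < sInf (Set.range fun γ : Γ => lamC a (y γ)) :=
      lt_of_le_of_ne (hinf_nonneg a ha) (Ne.symm hne')
    have h2 : (sInf (Set.range fun γ : Γ => lamC a (y γ))) • a = 0 :=
      le_antisymm h1 (smul_nonneg (hinf_nonneg a ha) (hatom a ha).1)
    have : a = 0 := by
      have h5 := congrArg (fun z => (sInf (Set.range fun γ : Γ => lamC a (y γ)))⁻¹ • z) h2
      simpa [inv_smul_smul₀ (ne_of_gt hpos)] using h5
    exact (hatom a ha).2.1 this
  have hex : ∀ a ∈ s, ∃ γ : Γ, lamC a (y γ) < 2⁻¹ := by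
    intro a ha
    have h1 : sInf (Set.range fun γ : Γ => lamC a (y γ)) < 2⁻¹ := by
      rw [hinf0 a ha]; norm_num
    obtain ⟨_, ⟨γ, rfl⟩, hlt⟩ := exists_lt_of_csInf_lt (s := Set.range fun γ : Γ => lamC a (y γ)) ⟨_, ⟨Classical.arbitrary Γ, rfl⟩⟩ h1
    exact ⟨γ, hlt⟩
  choose γf hγf using hex
  obtain ⟨γs, hγs⟩ := Finset.exists_le (s.attach.image (fun a : {z // z ∈ s} => γf a.1 a.2))
  set c := (2⁻¹ : ℝ) • e with hc
  have hc0 : 0 ≤ c := smul_nonneg (by norm_num) he0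
  have hcc : c + c = e := by rw [hc, ← add_smul]; norm_num
  have hkey : y γs ≤ c := by
    have hyd := hdecomp (y γs) (hy0 γs)
    rw [hyd, hc, he, Finset.smul_sum]
    refine my_sum_le_sum fun a ha => ?_
    have hγa : γf a ha ≤ γs :=
      hγs _ (Finset.mem_image.2 ⟨⟨a, ha⟩, Finset.mem_attach _ _, rfl⟩)
    have h1 : lamC a (y γs) ≤ lamC a (y (γf a ha)) :=
      lamC_mono hArch (hatom a ha).1 (hatom a ha).2.1 (hy0 γs) (hanti hγa)
    exact my_smul_mono_scalar (by linarith [hγf a ha]) (hatom a ha).1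
  obtain ⟨α₀, hα₀⟩ := htail γs
  refine ⟨α₀, c + |l|, ?_⟩
  intro α hα
  have h1 := hα₀ α hα
  have hnn : 0 ≤ |x α - l| ⊓ e := le_inf (abs_nonneg _) he0
  rw [sub_zero, abs_of_nonneg hnn] at h1
  have h2 : |x α - l| ⊓ e ≤ c := h1.trans hkey
  set aa := |x α - l| with haa
  set u' := (aa - c) ⊔ 0 with hu'
  have hu'0 : 0 ≤ u' := le_sup_right
  have hinfc : u' ⊓ c = 0 := by
    have hd1 : u' ⊓ c ≤ (c ⊓ (aa - c)) ⊔ (c ⊓ 0) := by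
      rw [inf_comm]; exact my_inf_sup_le c (aa - c) 0
    have hd2 : c ⊓ 0 = 0 := inf_eq_right.2 hc0
    have hd3 : c ⊓ (aa - c) = ((c + c) ⊓ aa) - c := by
      have h6 : ((c + c) ⊓ aa) - c = (-c + (c + c)) ⊓ (-c + aa) := by
        rw [sub_eq_neg_add]; exact add_inf _ _ _
      rw [h6, neg_add_cancel_left, neg_add_eq_sub]
    have hd4 : ((c + c) ⊓ aa) - c ≤ 0 := by
      rw [hcc, inf_comm]
      exact sub_nonpos.2 h2
    have hd5 : u' ⊓ c ≤ 0 := by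
      refine hd1.trans ?_
      rw [hd2, hd3]
      exact sup_le hd4 (le_refl 0)
    exact le_antisymm hd5 (le_inf hu'0 hc0)
  have hCnn : ∀ a ∈ s, 0 ≤ lamC a u' :=
    fun a ha => lamC_nonneg hArch (hatom a ha).1 (hatom a ha).2.1 hu'0
  set C := ∑ a ∈ s, lamC a u' with hC
  have hu'le : u' ≤ C • e := by
    rw [hdecomp u' hu'0, he, Finset.smul_sum]
    refine my_sum_le_sum fun a ha => my_smul_mono_scalar ?_ (hatom a ha).1
    exact Finset.single_le_sum hCnn ha
  set n := ⌈2*C⌉₊ with hn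
  have hu'n : u' ≤ n • c := by
    calc u' ≤ C • e := hu'le
      _ = (2*C) • c := by rw [hc, smul_smul]; congr 1; ring
      _ ≤ ((n : ℕ) : ℝ) • c := my_smul_mono_scalar (Nat.le_ceil _) hc0
      _ = n • c := Nat.cast_smul_eq_nsmul ℝ n c
  have hu'z : u' = 0 := by
    have h3 : u' = u' ⊓ (n • c) := (inf_eq_left.2 hu'n).symm
    have h4 : u' ⊓ (n • c) ≤ n • (u' ⊓ c) := my_inf_nsmul_le hu'0 hc0 n
    rw [hinfc, smul_zero] at h4
    exact le_antisymm (h3 ▸ h4) hu'0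
  have haac : aa ≤ c := by
    have h5 : aa - c ≤ u' := le_sup_left
    rw [hu'z] at h5
    exact sub_nonpos.1 h5
  calc |x α| = |(x α - l) + l| := by rw [sub_add_cancel]
    _ ≤ |x α - l| + |l| := abs_add_le _ _
    _ ≤ c + |l| := add_le_add_left haac _

section RevHelp
variable {X : Type*} [AddCommGroup X] [Lattice X] [CovariantClass X X (· + ·) (· ≤ ·)]

theorem my_le_sub_sup {p q u : X} (hpu : p ≤ u) (hpq : p ⊓ q = 0) :
    p ≤ (u - q) ⊔ 0 := by
  calc p = p - (q ⊓ p) := by rw [inf_comm q p, hpq, sub_zero]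
    _ = (p - q) ⊔ (p - p) := sub_inf q p p
    _ = (p - q) ⊔ 0 := by rw [sub_self]
    _ ≤ (u - q) ⊔ 0 := sup_le_sup_right (sub_le_sub_right hpu q) 0

theorem my_arch_sup_ind (hA : ∀ x y : X, (∀ n : ℕ, n • x ≤ y) → x ≤ 0)
    {w u : X} (hu0 : 0 ≤ u) (h : ∀ j : ℕ, w ≤ (u - j • w) ⊔ 0) : w ≤ 0 := by
  refine hA w u ?_
  intro j
  induction j with
  | zero => simpa using hu0
  | succ j ih =>
      have h1 : w + j • w ≤ ((u - j • w) ⊔ 0) + j • w := add_le_add_left (h j) _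
      have h2 : ((u - j • w) ⊔ 0) + j • w = u ⊔ (j • w) := by
        rw [sup_add, sub_add_cancel, zero_add]
      have h3 : u ⊔ (j • w) = u := sup_eq_left.2 ih
      rw [succ_nsmul, add_comm]
      rw [h2, h3] at h1
      exact h1

end RevHelp

/-- The index type for the unbounded net: pairs `(n, m)` compared only by `n`. -/
def NetIdx : Type v := ULift.{v} (ℕ × ℕ)

instance : Preorder NetIdx.{v} where
  le p q := p.down.1 ≤ q.down.1
  lt p q := p.down.1 ≤ q.down.1 ∧ ¬ q.down.1 ≤ p.down.1
  le_refl p := Nat.le_refl _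
  le_trans p q r h1 h2 := Nat.le_trans h1 h2
  lt_iff_le_not_ge p q := Iff.rfl

instance : Nonempty NetIdx.{v} := ⟨⟨(0, 0)⟩⟩

instance : IsDirected NetIdx.{v} (· ≤ ·) :=
  ⟨fun p q => ⟨⟨(max p.down.1 q.down.1, 0)⟩,
    show p.down.1 ≤ max p.down.1 q.down.1 from le_max_left _ _,
    show q.down.1 ≤ max p.down.1 q.down.1 from le_max_right _ _⟩⟩

theorem reverse_uo {X : Type u} [AddCommGroup X] [Lattice X]
    [CovariantClass X X (· + ·) (· ≤ ·)]
    (hArch : ∀ x y : X, (∀ n : ℕ, n • x ≤ y) → x ≤ 0) (d : ℕ → X)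
    (hd0 : ∀ n, 0 ≤ d n) (hdisj : ∀ n m : ℕ, n ≠ m → d n ⊓ d m = 0) :
    UOConvergesTo (fun α : NetIdx.{v} => (α.down.2 : ℕ) • d α.down.1) (0 : X) := by
  intro u hu
  classical
  have hv0 : ∀ n m : ℕ, (0:X) ≤ (m • d n) ⊓ u := fun n m => le_inf (nsmul_nonneg (hd0 n) m) hu
  have hvu : ∀ n m : ℕ, (m • d n) ⊓ u ≤ u := fun n m => inf_le_right
  have hvd : ∀ n m : ℕ, (m • d n) ⊓ u ≤ m • d n := fun n m => inf_le_left
  refine ⟨{p : ℕ × X // ∀ n, p.1 ≤ n → ∀ m : ℕ, (m • d n) ⊓ u ≤ p.2},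
    { le := fun p q => p.1.1 ≤ q.1.1 ∧ q.1.2 ≤ p.1.2,
      lt := fun p q => (p.1.1 ≤ q.1.1 ∧ q.1.2 ≤ p.1.2) ∧ ¬ (q.1.1 ≤ p.1.1 ∧ p.1.2 ≤ q.1.2),
      le_refl := fun p => ⟨Nat.le_refl _, le_refl _⟩,
      le_trans := fun p q r h1 h2 => ⟨Nat.le_trans h1.1 h2.1, le_trans h2.2 h1.2⟩,
      lt_iff_le_not_ge := fun p q => Iff.rfl },
    ⟨⟨(0, u), fun n _ m => hvu n m⟩⟩, ⟨fun p q => ?_⟩,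
    fun p => p.1.2, fun p q hpq => hpq.2, ⟨?_, ?_⟩, ?_⟩
  · -- directedness
    refine ⟨⟨(max p.1.1 q.1.1, p.1.2 ⊓ q.1.2), ?_⟩, ⟨le_max_left _ _, inf_le_left⟩,
      ⟨le_max_right _ _, inf_le_right⟩⟩
    intro n hn m
    exact le_inf (p.2 n (le_trans (le_max_left _ _) hn) m)
      (q.2 n (le_trans (le_max_right _ _) hn) m)
  · -- 0 is a lower bound
    rintro _ ⟨p, rfl⟩
    have h := p.2 p.1.1 (le_refl _) 0
    rw [zero_nsmul] at h
    rwa [inf_eq_left.2 hu] at h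
  · -- 0 is the greatest lower bound
    intro b hb
    set c := b ⊔ 0 with hcdef
    have hc0 : (0:X) ≤ c := le_sup_right
    have hz0 : ∀ z : X, (∀ n, (0:ℕ) ≤ n → ∀ m : ℕ, (m • d n) ⊓ u ≤ z) → 0 ≤ z := by
      intro z hz
      have h := hz 0 (le_refl _) 0
      rw [zero_nsmul] at h
      rwa [inf_eq_left.2 hu] at h
    have hcz : ∀ N (z : X), (∀ n, N ≤ n → ∀ m : ℕ, (m • d n) ⊓ u ≤ z) → c ≤ z := by
      intro N z hz
      refine sup_le (hb ⟨⟨(N, z), hz⟩, rfl⟩) ?_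
      have h := hz N (le_refl _) 0
      rw [zero_nsmul] at h
      rwa [inf_eq_left.2 hu] at h
    have hcu : c ≤ u := hcz 0 u (fun n _ m => hvu n m)
    have step1 : ∀ k mk : ℕ, c ⊓ ((mk • d k) ⊓ u) = 0 := by
      intro k mk
      set w := c ⊓ ((mk • d k) ⊓ u) with hwdef
      have hw0 : 0 ≤ w := le_inf hc0 (hv0 k mk)
      have hwv : w ≤ (mk • d k) ⊓ u := inf_le_right
      have hwu : w ≤ u := hwv.trans (hvu k mk)
      have hmem : ∀ j : ℕ, ∀ n, k+1 ≤ n → ∀ m : ℕ,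
          (m • d n) ⊓ u ≤ (u - j • ((mk • d k) ⊓ u)) ⊔ 0 := by
        intro j n hn m
        have hnk : n ≠ k := by omega
        have hdisj' : ((m • d n) ⊓ u) ⊓ (j • ((mk • d k) ⊓ u)) = 0 := by
          have h1 : ((m • d n) ⊓ u) ⊓ (j • ((mk • d k) ⊓ u)) ≤
              (m • d n) ⊓ (j • (mk • d k)) :=
            inf_le_inf (hvd n m) (nsmul_le_nsmul_right (hvd k mk) j)
          have h2 : (m • d n) ⊓ (j • (mk • d k)) = 0 := by
            rw [smul_smul]
            exact my_disj_nsmul (hd0 n) (hd0 k) (hdisj n k hnk) m (j * mk)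
          rw [h2] at h1
          exact le_antisymm h1 (le_inf (hv0 n m) (nsmul_nonneg (hv0 k mk) j))
        exact my_le_sub_sup (hvu n m) hdisj'
      have hwle : ∀ j : ℕ, w ≤ (u - j • w) ⊔ 0 := by
        intro j
        have h1 : c ≤ (u - j • ((mk • d k) ⊓ u)) ⊔ 0 := hcz (k+1) _ (hmem j)
        have h2 : (u - j • ((mk • d k) ⊓ u)) ⊔ 0 ≤ (u - j • w) ⊔ 0 :=
          sup_le_sup_right (sub_le_sub_left (nsmul_le_nsmul_right hwv j) u) 0
        exact inf_le_left.trans (h1.trans h2)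
      have hwz : w ≤ 0 := my_arch_sup_ind hArch hu hwle
      exact le_antisymm hwz hw0
    have step2 : ∀ j : ℕ, c ≤ (u - j • c) ⊔ 0 := by
      intro j
      refine hcz 0 _ ?_
      intro n _ m
      have hdisj' : ((m • d n) ⊓ u) ⊓ (j • c) = 0 := by
        have h1 : ((m • d n) ⊓ u) ⊓ (j • c) ≤ j • (((m • d n) ⊓ u) ⊓ c) :=
          my_inf_nsmul_le (hv0 n m) hc0 j
        have h2 : ((m • d n) ⊓ u) ⊓ c = 0 := by
          rw [inf_comm]; exact step1 n m
        rw [h2, smul_zero] at h1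
        exact le_antisymm h1 (le_inf (hv0 n m) (nsmul_nonneg hc0 j))
      exact my_le_sub_sup (hvu n m) hdisj'
    have hcle : c ≤ 0 := my_arch_sup_ind hArch hu step2
    exact le_sup_left.trans hcle
  · -- tails
    intro p
    refine ⟨⟨(p.1.1, 0)⟩, fun α hα => ?_⟩
    have h0 : (0:X) ≤ (α.down.2 • d α.down.1) ⊓ u := hv0 _ _
    have h1 : |((α.down.2 : ℕ) • d α.down.1 : X) - 0| = (α.down.2 : ℕ) • d α.down.1 := by
      rw [sub_zero]; exact abs_of_nonneg (nsmul_nonneg (hd0 _) _)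
    simp only [sub_zero]
    rw [abs_of_nonneg (nsmul_nonneg (hd0 α.down.1) α.down.2), abs_of_nonneg h0]
    exact p.2 α.down.1 hα α.down.2



/-- An Archimedean vector lattice `X` over `ℝ` is finite-dimensional iff every net in `X`
that is uo-convergent to some element of `X` is eventually order bounded in `X`. -/
theorem finiteDimensional_iff_uoConvergent_eventuallyOrderBounded
    {X : Type u} [AddCommGroup X] [Lattice X]
    [CovariantClass X X (· + ·) (· ≤ ·)] [Module ℝ X] [PosSMulMono ℝ X]
    (hArch : ArchimedeanVL X) :
    FiniteDimensional ℝ X ↔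
      ∀ (ι : Type v) (_ : Preorder ι) (_ : Nonempty ι),
        IsDirected ι (· ≤ ·) →
        ∀ (x : ι → X) (l : X), UOConvergesTo x l → EventuallyOrderBounded x := by
  have hA : ∀ x y : X, (∀ n : ℕ, n • x ≤ y) → x ≤ 0 := hArch
  constructor
  · intro hfd ι iι hne hdir x l hx
    exact forward_dir hA x l hx
  · intro hRHS
    by_cases hI : InfDisjSeq X
    · obtain ⟨d, hd0, hdne, hdisj⟩ := hI
      have hUO := reverse_uo hA d hd0 hdisj
      have hEB := hRHS NetIdx.{v} inferInstance inferInstance inferInstance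
        (fun α : NetIdx.{v} => (α.down.2 : ℕ) • d α.down.1) 0 hUO
      obtain ⟨α₀, b, hb⟩ := hEB
      have harch : ∀ m : ℕ, m • d α₀.down.1 ≤ b := fun m =>
        (le_abs_self _).trans
          (hb ⟨(α₀.down.1, m)⟩ (show α₀.down.1 ≤ α₀.down.1 from Nat.le_refl _))
      have hle := hA _ _ harch
      exact absurd (le_antisymm hle (hd0 _)) (hdne _)
    · obtain ⟨s, hatom, hpair, hdecomp⟩ := exists_atomic_basis hA hI
      have hspan : ∀ z : X, z ∈ Submodule.span ℝ (↑s : Set X) := by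
        intro z
        have hrepr : ∀ w : X, 0 ≤ w → w ∈ Submodule.span ℝ (↑s : Set X) := by
          intro w hw
          rw [hdecomp w hw]
          exact Submodule.sum_mem _ fun a ha =>
            Submodule.smul_mem _ _ (Submodule.subset_span (Finset.mem_coe.mpr ha))
        have h1 := hrepr (z ⊔ 0) le_sup_right
        have h2 := hrepr ((-z) ⊔ 0) le_sup_right
        have h3 : z = (z ⊔ 0) - ((-z) ⊔ 0) := by
          rw [← posPart_def, ← negPart_def]
          exact (posPart_sub_negPart z).symm
        rw [h3]
        exact Submodule.sub_mem _ h1 h2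
      have htop : Submodule.span ℝ (↑s : Set X) = ⊤ := by
        rw [Submodule.eq_top_iff']
        exact hspan
      exact Module.finite_def.2 ⟨s, htop⟩
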